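/- arXiv:2404.08837 — 2 statements merged into one kernel-verified Lean document; each statement's English description precedes it below -/
import Mathlib

section
/- Let A be an m × n totally unimodular integer matrix and suppose P = {x ∈ ℝ^n : A x = 𝟙 and 0 ≤ x ≤ 1 (componentwise)} is nonempty, where 𝟙 denotes the all-ones vector in ℝ^m. Then for every c ∈ ℝ^n there exists x* ∈ P whose coordinates all lie in {0, 1} such that ⟨c, x*⟩ ≤ ⟨c, x⟩ for all x ∈ P; i.e., the linear program over P attains its minimum at a 0/1 point. -/
open Matrix Submodule Module

lemma isUnit_of_signType {z : ℤ} (hz : z ∈ Set.range (SignType.cast : SignType → ℤ))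
    (hnz : z ≠ 0) : IsUnit z := by
  obtain ⟨s, rfl⟩ := hz
  cases s with
  | zero => simp at hnz
  | pos => simp
  | neg => simpa using isUnit_one.neg

lemma key_integral {m n : ℕ} (A : Matrix (Fin m) (Fin n) ℤ) (hA : A.IsTotallyUnimodular)
    (x : Fin n → ℝ) (hAx : ∀ i, (A.map (Int.cast : ℤ → ℝ)).mulVec x i = 1)
    (hbox : ∀ j, 0 ≤ x j ∧ x j ≤ 1)
    (F : Finset (Fin n)) (hFdef : ∀ j, j ∈ F ↔ (x j ≠ 0 ∧ x j ≠ 1))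
    (hind : LinearIndependent ℝ
      (fun j : {j : Fin n // j ∈ F} => fun i : Fin m => (A i (j : Fin n) : ℝ))) :
    ∀ j, x j = 0 ∨ x j = 1 := by
  classical
  set k := F.card with hk
  set M : Matrix (Fin m) {j : Fin n // j ∈ F} ℝ := fun i j => (A i (j : Fin n) : ℝ) with hM
  -- columns of M are linearly independent, so mulVecLin is injective
  have hinj : Function.Injective M.mulVecLin := by
    rw [← LinearMap.ker_eq_bot, Matrix.ker_mulVecLin_eq_bot_iff]
    intro v hv
    rw [Fintype.linearIndependent_iff] at hind
    refine funext fun j => hind v ?_ j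
    funext i
    have := congrFun hv i
    simpa [Matrix.mulVec, dotProduct, mul_comm] using this
  have hcardF : Fintype.card {j : Fin n // j ∈ F} = k := Fintype.card_coe F
  have hrankM : M.rank = k := by
    rw [Matrix.rank, LinearMap.finrank_range_of_inj hinj,
      Module.finrank_fintype_fun_eq_card, hcardF]
  have hspanM : span ℝ (Set.range M) = ⊤ := by
    apply Submodule.eq_top_of_finrank_eq
    have h1 : Mᵀ.rank = k := by rw [Matrix.rank_transpose, hrankM]
    rw [Matrix.rank_eq_finrank_span_cols] at h1
    change finrank ℝ (span ℝ (Set.range M)) = k at h1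
    rw [h1, Module.finrank_fintype_fun_eq_card, hcardF]
  obtain ⟨b, hbsub, hbspan, hbind⟩ := exists_linearIndependent ℝ (Set.range M)
  rw [hspanM] at hbspan
  have hbfin : b.Finite := hbind.setFinite
  haveI : Fintype b := hbfin.fintype
  have hbbasis : Basis b ℝ ({j : Fin n // j ∈ F} → ℝ) :=
    Basis.mk hbind (by rw [Subtype.range_coe, hbspan])
  have hbcard : Fintype.card b = k := by
    have := Module.finrank_eq_card_basis hbbasis
    rw [Module.finrank_fintype_fun_eq_card, hcardF] at this
    exact this.symm
  -- choose row indices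
  have hchoose : ∀ v : b, ∃ i : Fin m, M i = (v : {j : Fin n // j ∈ F} → ℝ) := fun v => hbsub v.2
  choose φ hφ using hchoose
  have hφinj : Function.Injective φ := by
    intro v w hvw
    apply Subtype.ext
    rw [← hφ v, ← hφ w, hvw]
  let e : Fin k ≃ b := (Fintype.equivFinOfCardEq hbcard).symm
  let e2 : Fin k ≃ {j : Fin n // j ∈ F} := F.equivFin.symm
  let f : Fin k → Fin m := φ ∘ e
  let g : Fin k → Fin n := fun r => (e2 r : Fin n)
  have hfinj : Function.Injective f := hφinj.comp e.injective
  have hginj : Function.Injective g := Subtype.coe_injective.comp e2.injective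
  set B : Matrix (Fin k) (Fin k) ℝ := (A.submatrix f g).map (Int.cast : ℤ → ℝ) with hB
  -- rows of B are linearly independent
  have hrows : LinearIndependent ℝ (fun r : Fin k => B r) := by
    have h1 : LinearIndependent ℝ (fun r : Fin k => ((e r : {j : Fin n // j ∈ F} → ℝ))) :=
      hbind.comp e e.injective
    let L : ({j : Fin n // j ∈ F} → ℝ) ≃ₗ[ℝ] (Fin k → ℝ) :=
      LinearEquiv.funCongrLeft ℝ ℝ e2
    have h2 := h1.map' L.toLinearMap L.ker
    have : (fun r : Fin k => B r) = fun r : Fin k => L ((e r : {j : Fin n // j ∈ F} → ℝ)) := by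
      funext r s
      have := congrFun (hφ (e r)) (e2 s)
      have hL : L (↑(e r)) s = (↑(e r) : {j : Fin n // j ∈ F} → ℝ) (e2 s) := rfl
      rw [hL, ← this]
      rfl
    rw [this]
    exact h2
  have hBunit : IsUnit B := Matrix.linearIndependent_rows_iff_isUnit.mp hrows
  have hdetB : IsUnit B.det := (Matrix.isUnit_iff_isUnit_det B).mp hBunit
  have hdetcast : B.det = ((A.submatrix f g).det : ℝ) := by
    have := RingHom.map_det (Int.castRingHom ℝ) (A.submatrix f g)
    rw [RingHom.mapMatrix_apply] at this
    simpa [hB] using this.symm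
  have hdetZ : (A.submatrix f g).det ≠ 0 := by
    intro h
    rw [hdetcast, h] at hdetB
    simp at hdetB
  have hdetunit : IsUnit (A.submatrix f g).det :=
    isUnit_of_signType (hA k f g hfinj hginj) hdetZ
  set C : Matrix (Fin k) (Fin k) ℤ := (A.submatrix f g)⁻¹ with hC
  have hmulC : A.submatrix f g * C = 1 := Matrix.mul_nonsing_inv _ hdetunit
  -- integral right-hand side
  set b' : Fin k → ℤ := fun r => 1 - ∑ j ∈ Fᶜ, A (f r) j * (if x j = 1 then 1 else 0) with hb'
  have hxcomp : ∀ j ∈ Fᶜ, x j = ((if x j = 1 then (1:ℤ) else 0) : ℝ) := by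
    intro j hj
    rw [Finset.mem_compl, hFdef] at hj
    push_neg at hj
    by_cases h1 : x j = 1
    · simp [h1]
    · have h0 : x j = 0 := by
        by_contra h0
        exact h1 (hj h0)
      simp [h0, h1]
  have claim1 : B.mulVec (x ∘ g) = fun r => (b' r : ℝ) := by
    funext r
    have hrow := hAx (f r)
    simp only [Matrix.mulVec, dotProduct, Matrix.map_apply] at hrow
    have hsplit : ∑ j ∈ F, (A (f r) j : ℝ) * x j + ∑ j ∈ Fᶜ, (A (f r) j : ℝ) * x j
        = ∑ j : Fin n, (A (f r) j : ℝ) * x j := Finset.sum_add_sum_compl F _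
    have hsum2 : ∑ j ∈ Fᶜ, (A (f r) j : ℝ) * x j
        = ((∑ j ∈ Fᶜ, A (f r) j * (if x j = 1 then 1 else 0) : ℤ) : ℝ) := by
      rw [Int.cast_sum]
      refine Finset.sum_congr rfl fun j hj => ?_
      rw [Int.cast_mul]
      congr 1
      simpa using hxcomp j hj
    have hBr : B.mulVec (x ∘ g) r = ∑ j ∈ F, (A (f r) j : ℝ) * x j := by
      have h0 : ∑ j ∈ F, (A (f r) j : ℝ) * x j
          = ∑ j : {j : Fin n // j ∈ F}, (A (f r) (j : Fin n) : ℝ) * x (j : Fin n) :=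
        (Finset.sum_coe_sort F fun j => (A (f r) j : ℝ) * x j).symm
      rw [h0, ← Equiv.sum_comp e2
        (fun j : {j : Fin n // j ∈ F} => (A (f r) (j : Fin n) : ℝ) * x (j : Fin n))]
      simp [hB, Matrix.mulVec, dotProduct]
      rfl
    rw [hBr]
    simp only [hb']
    rw [Int.cast_sub, Int.cast_one, ← hsum2]
    linarith [hsplit, hrow]
  have claim2 : B.mulVec (fun s => ((C.mulVec b') s : ℝ)) = fun r => (b' r : ℝ) := by
    funext r
    have h1 : ((A.submatrix f g).mulVec (C.mulVec b')) = b' := by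
      rw [Matrix.mulVec_mulVec, hmulC, Matrix.one_mulVec]
    have h2 := RingHom.map_mulVec (Int.castRingHom ℝ) (A.submatrix f g) (C.mulVec b') r
    rw [h1] at h2
    exact h2.symm
  have hinjB : Function.Injective B.mulVec := Matrix.mulVec_injective_iff_isUnit.mpr hBunit
  have hxg : (x ∘ g) = fun s => ((C.mulVec b') s : ℝ) := hinjB (claim1.trans claim2.symm)
  -- conclude
  intro j
  by_contra hcon
  push_neg at hcon
  have hjF : j ∈ F := (hFdef j).mpr hcon
  have := congrFun hxg (e2.symm ⟨j, hjF⟩)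
  simp only [Function.comp_apply] at this
  have hgj : g (e2.symm ⟨j, hjF⟩) = j := by simp [g]
  rw [hgj] at this
  set z := C.mulVec b' (e2.symm ⟨j, hjF⟩) with hz
  have h0 : (0:ℝ) ≤ (z:ℝ) := this ▸ (hbox j).1
  have h1 : (z:ℝ) ≤ 1 := this ▸ (hbox j).2
  have hz0 : (0:ℤ) ≤ z := by exact_mod_cast h0
  have hz1 : z ≤ 1 := by exact_mod_cast h1
  interval_cases z
  · exact hcon.1 (by simpa using this)
  · exact hcon.2 (by simpa using this)




lemma exchange_step {m n : ℕ} (A : Matrix (Fin m) (Fin n) ℤ)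
    (c x : Fin n → ℝ)
    (P : Set (Fin n → ℝ))
    (hP : P = {x : Fin n → ℝ | (∀ i, (A.map (Int.cast : ℤ → ℝ)).mulVec x i = 1) ∧
      ∀ j, 0 ≤ x j ∧ x j ≤ 1})
    (hx : x ∈ P) (hmin : ∀ z ∈ P, ∑ j, c j * x j ≤ ∑ j, c j * z j)
    (F : Finset (Fin n)) (hFdef : ∀ j, j ∈ F ↔ (x j ≠ 0 ∧ x j ≠ 1))
    (hdep : ¬ LinearIndependent ℝ
      (fun j : {j : Fin n // j ∈ F} => fun i : Fin m => (A i (j : Fin n) : ℝ))) :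
    ∃ y ∈ P, (∀ z ∈ P, ∑ j, c j * y j ≤ ∑ j, c j * z j) ∧
      (∀ j, (y j ≠ 0 ∧ y j ≠ 1) → (x j ≠ 0 ∧ x j ≠ 1)) ∧
      ∃ j0, (x j0 ≠ 0 ∧ x j0 ≠ 1) ∧ (y j0 = 0 ∨ y j0 = 1) := by
  classical
  obtain ⟨hAx, hbox⟩ : (∀ i, (A.map (Int.cast : ℤ → ℝ)).mulVec x i = 1) ∧
      ∀ j, 0 ≤ x j ∧ x j ≤ 1 := by rw [hP] at hx; exact hx
  obtain ⟨w, hw0, jstar, hjstar⟩ := Fintype.not_linearIndependent_iff.mp hdep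
  set d : Fin n → ℝ := fun j => if h : j ∈ F then w ⟨j, h⟩ else 0 with hd
  have hdF : ∀ j, j ∉ F → d j = 0 := fun j hj => by simp [hd, hj]
  have hAd : ∀ i, ∑ j, (A i j : ℝ) * d j = 0 := by
    intro i
    have h1 := congrFun hw0 i
    simp only [Finset.sum_apply, Pi.smul_apply, Pi.zero_apply, smul_eq_mul] at h1
    have h2 : ∑ j, (A i j : ℝ) * d j = ∑ j ∈ F, (A i j : ℝ) * d j := by
      rw [← Finset.sum_subset (Finset.subset_univ F)]
      intro j _ hj
      rw [hdF j hj, mul_zero]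
    rw [h2, ← Finset.sum_coe_sort F (fun j => (A i j : ℝ) * d j)]
    rw [← h1]
    refine Finset.sum_congr rfl fun j _ => ?_
    simp [hd, j.2, mul_comm]
  set S : Finset (Fin n) := F.filter (fun j => d j ≠ 0) with hS
  have hjstarS : jstar.1 ∈ S := by
    rw [hS, Finset.mem_filter]
    refine ⟨jstar.2, ?_⟩
    simpa [hd, jstar.2] using hjstar
  have hSne : S.Nonempty := ⟨jstar.1, hjstarS⟩
  have hdS : ∀ j, d j ≠ 0 → j ∈ S := by
    intro j hj
    by_cases h : j ∈ F
    · rw [hS, Finset.mem_filter]; exact ⟨h, hj⟩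
    · exact absurd (hdF j h) hj
  have hfrac : ∀ j ∈ S, 0 < x j ∧ x j < 1 := by
    intro j hj
    rw [hS, Finset.mem_filter] at hj
    obtain ⟨h1, h2⟩ := (hFdef j).mp hj.1
    exact ⟨lt_of_le_of_ne (hbox j).1 (Ne.symm h1), lt_of_le_of_ne (hbox j).2 h2⟩
  -- membership lemma
  have hmem : ∀ t : ℝ, (∀ j ∈ S, |t * d j| ≤ min (x j) (1 - x j)) →
      (fun j => x j + t * d j) ∈ P := by
    intro t ht
    rw [hP]
    constructor
    · intro i
      have h1 : (A.map (Int.cast : ℤ → ℝ)).mulVec (fun j => x j + t * d j) i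
          = ∑ j, (A i j : ℝ) * (x j + t * d j) := by
        simp [Matrix.mulVec, dotProduct, Matrix.map_apply]
      rw [h1]
      have h2 : ∑ j, (A i j : ℝ) * (x j + t * d j)
          = ∑ j, (A i j : ℝ) * x j + t * ∑ j, (A i j : ℝ) * d j := by
        rw [Finset.mul_sum, ← Finset.sum_add_distrib]
        exact Finset.sum_congr rfl fun j _ => by ring
      rw [h2, hAd i, mul_zero, add_zero]
      have := hAx i
      simpa [Matrix.mulVec, dotProduct, Matrix.map_apply] using this
    · intro j
      dsimp only
      by_cases hj : d j = 0
      · simp [hj, hbox j]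
      · have hjS := hdS j hj
        have h1 := ht j hjS
        have h2 := abs_le.mp h1
        have h3 := hfrac j hjS
        constructor
        · have : min (x j) (1 - x j) ≤ x j := min_le_left _ _
          linarith [h2.1]
        · have : min (x j) (1 - x j) ≤ 1 - x j := min_le_right _ _
          linarith [h2.2]
  -- c · d = 0
  set ε : ℝ := S.inf' hSne (fun j => min (x j) (1 - x j) / |d j|) with hε
  have hεpos : 0 < ε := by
    rw [hε, Finset.lt_inf'_iff]
    intro j hj
    have h1 := hfrac j hj
    have h2 : d j ≠ 0 := by rw [hS, Finset.mem_filter] at hj; exact hj.2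
    apply div_pos (lt_min (by linarith [h1.1]) (by linarith [h1.2])) (abs_pos.mpr h2)
  have hbound : ∀ t : ℝ, |t| ≤ ε → ∀ j ∈ S, |t * d j| ≤ min (x j) (1 - x j) := by
    intro t ht j hj
    have h2 : d j ≠ 0 := by rw [hS, Finset.mem_filter] at hj; exact hj.2
    have h3 : ε ≤ min (x j) (1 - x j) / |d j| := Finset.inf'_le _ hj
    rw [abs_mul]
    calc |t| * |d j| ≤ ε * |d j| := by
          apply mul_le_mul_of_nonneg_right ht (abs_nonneg _)
      _ ≤ (min (x j) (1 - x j) / |d j|) * |d j| := by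
          apply mul_le_mul_of_nonneg_right h3 (abs_nonneg _)
      _ = min (x j) (1 - x j) := by field_simp
  have hsum : ∀ t : ℝ, ∑ j, c j * (x j + t * d j) = ∑ j, c j * x j + t * ∑ j, c j * d j := by
    intro t
    rw [Finset.mul_sum, ← Finset.sum_add_distrib]
    exact Finset.sum_congr rfl fun j _ => by ring
  have hcd : ∑ j, c j * d j = 0 := by
    have hp := hmin _ (hmem ε (hbound ε (le_of_eq (abs_of_pos hεpos))))
    have hm := hmin _ (hmem (-ε) (hbound (-ε) (by rw [abs_neg, abs_of_pos hεpos])))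
    rw [hsum ε] at hp
    rw [hsum (-ε)] at hm
    nlinarith [hp, hm, hεpos]
  -- move to boundary
  set tj : Fin n → ℝ := fun j => if 0 < d j then (1 - x j) / d j else x j / (-d j) with htj
  set T : ℝ := S.inf' hSne tj with hT
  have htjpos : ∀ j ∈ S, 0 < tj j := by
    intro j hj
    have h2 : d j ≠ 0 := by rw [hS, Finset.mem_filter] at hj; exact hj.2
    have h3 := hfrac j hj
    by_cases h : 0 < d j
    · rw [show tj j = (1 - x j) / d j by simp only [htj]; rw [if_pos h]]
      apply div_pos (by linarith [h3.2]) h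
    · rw [show tj j = x j / (-d j) by simp only [htj]; rw [if_neg h]]
      have : d j < 0 := lt_of_le_of_ne (not_lt.mp h) h2
      apply div_pos (by linarith [h3.1]) (by linarith)
  have hTpos : 0 < T := by
    rw [hT, Finset.lt_inf'_iff]
    exact htjpos
  obtain ⟨j1, hj1S, hj1T⟩ := Finset.exists_mem_eq_inf' hSne tj
  set y : Fin n → ℝ := fun j => x j + T * d j with hy
  have hymem : y ∈ P := by
    rw [hP]
    constructor
    · intro i
      have h1 : (A.map (Int.cast : ℤ → ℝ)).mulVec y i = ∑ j, (A i j : ℝ) * (x j + T * d j) := by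
        simp [hy, Matrix.mulVec, dotProduct, Matrix.map_apply]
      rw [h1]
      have h2 : ∑ j, (A i j : ℝ) * (x j + T * d j)
          = ∑ j, (A i j : ℝ) * x j + T * ∑ j, (A i j : ℝ) * d j := by
        rw [Finset.mul_sum, ← Finset.sum_add_distrib]
        exact Finset.sum_congr rfl fun j _ => by ring
      rw [h2, hAd i, mul_zero, add_zero]
      simpa [Matrix.mulVec, dotProduct, Matrix.map_apply] using hAx i
    · intro j
      by_cases hj : d j = 0
      · simp [hy, hj, hbox j]
      · have hjS := hdS j hj
        have h3 := hfrac j hjS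
        have hTle : T ≤ tj j := hT ▸ Finset.inf'_le _ hjS
        by_cases h : 0 < d j
        · have htjj : tj j = (1 - x j) / d j := by simp only [htj]; rw [if_pos h]
          constructor
          · have : 0 ≤ T * d j := mul_nonneg hTpos.le h.le
            simp only [hy]; linarith [h3.1]
          · have h4 : T * d j ≤ tj j * d j := mul_le_mul_of_nonneg_right hTle h.le
            rw [htjj, div_mul_cancel₀ _ hj] at h4
            simp only [hy]; linarith
        · have hdneg : d j < 0 := lt_of_le_of_ne (not_lt.mp h) hj
          have htjj : tj j = x j / (-d j) := by simp only [htj]; rw [if_neg h]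
          constructor
          · have h4 : tj j * d j ≤ T * d j := mul_le_mul_of_nonpos_right hTle hdneg.le
            rw [htjj] at h4
            have h5 : x j / (-d j) * d j = -x j := by
              rw [div_neg, neg_mul, div_mul_cancel₀ _ hj]
            rw [h5] at h4
            simp only [hy]; linarith
          · have : T * d j ≤ 0 := mul_nonpos_of_nonneg_of_nonpos hTpos.le hdneg.le
            simp only [hy]; linarith [h3.2]
  have hyval : ∑ j, c j * y j = ∑ j, c j * x j := by
    simp only [hy]
    rw [hsum T, hcd, mul_zero, add_zero]
  refine ⟨y, hymem, ?_, ?_, ?_⟩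
  · intro z hz
    rw [hyval]
    exact hmin z hz
  · intro j hjy
    by_contra hcon
    have hjF : j ∉ F := fun h => hcon ((hFdef j).mp h)
    have : y j = x j := by simp [hy, hdF j hjF]
    rw [this] at hjy
    exact hcon hjy
  · refine ⟨j1, ?_, ?_⟩
    · apply (hFdef j1).mp
      rw [hS, Finset.mem_filter] at hj1S
      exact hj1S.1
    · have hdj1 : d j1 ≠ 0 := by rw [hS, Finset.mem_filter] at hj1S; exact hj1S.2
      by_cases h : 0 < d j1
      · right
        have : y j1 = x j1 + ((1 - x j1) / d j1) * d j1 := by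
          simp only [hy]
          rw [hT, hj1T]
          simp only [htj]
          rw [if_pos h]
        rw [this, div_mul_cancel₀ _ hdj1]
        ring
      · left
        have : y j1 = x j1 + (x j1 / (-d j1)) * d j1 := by
          simp only [hy]
          rw [hT, hj1T]
          simp only [htj]
          rw [if_neg h]
        rw [this, div_neg, neg_mul, div_mul_cancel₀ _ hdj1]
        ring

/-- If `A` is a totally unimodular integer matrix and the polytope
`P = {x : ℝ^n | A x = 𝟙, 0 ≤ x ≤ 1}` is nonempty, then for every cost vector `c`
the linear program `min ⟨c, x⟩ over P` attains its minimum at a point of `P` all of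
whose coordinates lie in `{0, 1}`. -/
theorem lp_min_attained_at_zero_one_of_totallyUnimodular
    {m n : ℕ} (A : Matrix (Fin m) (Fin n) ℤ) (hA : A.IsTotallyUnimodular)
    (P : Set (Fin n → ℝ))
    (hP : P = {x : Fin n → ℝ | (∀ i, (A.map (Int.cast : ℤ → ℝ)).mulVec x i = 1) ∧
      ∀ j, 0 ≤ x j ∧ x j ≤ 1})
    (hne : P.Nonempty) :
    ∀ c : Fin n → ℝ, ∃ xs ∈ P, (∀ j, xs j = 0 ∨ xs j = 1) ∧
      ∀ x ∈ P, ∑ j, c j * xs j ≤ ∑ j, c j * x j := by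
  classical
  intro c
  set f : (Fin n → ℝ) → ℝ := fun x => ∑ j, c j * x j with hf
  have hfc : Continuous f := by
    apply continuous_finset_sum
    intro j _
    exact continuous_const.mul (continuous_apply j)
  have hPsub : P ⊆ Set.Icc (0 : Fin n → ℝ) 1 := by
    intro x hx
    rw [hP] at hx
    constructor
    · intro j; exact (hx.2 j).1
    · intro j; exact (hx.2 j).2
  have hPclosed : IsClosed P := by
    rw [hP]
    have : {x : Fin n → ℝ | (∀ i, (A.map (Int.cast : ℤ → ℝ)).mulVec x i = 1) ∧
        ∀ j, 0 ≤ x j ∧ x j ≤ 1}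
        = (⋂ i, {x : Fin n → ℝ | (A.map (Int.cast : ℤ → ℝ)).mulVec x i = 1}) ∩
          ⋂ j, ({x : Fin n → ℝ | 0 ≤ x j} ∩ {x : Fin n → ℝ | x j ≤ 1}) := by
      ext x
      simp [Set.mem_iInter, forall_and]
    rw [this]
    refine IsClosed.inter (isClosed_iInter fun i => ?_)
      (isClosed_iInter fun j => IsClosed.inter ?_ ?_)
    · have h1 : (fun x : Fin n → ℝ => (A.map (Int.cast : ℤ → ℝ)).mulVec x i)
          = fun x => ∑ j, (A i j : ℝ) * x j := by
        funext x
        simp [Matrix.mulVec, dotProduct, Matrix.map_apply]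
      exact isClosed_eq (show Continuous (fun x : Fin n → ℝ => (A.map (Int.cast : ℤ → ℝ)).mulVec x i) from
        by rw [h1]; exact (continuous_finset_sum _ fun j _ => continuous_const.mul (continuous_apply j))) continuous_const
    · exact isClosed_le continuous_const (continuous_apply j)
    · exact isClosed_le (continuous_apply j) continuous_const
  have hPcomp : IsCompact P := (isCompact_Icc).of_isClosed_subset hPclosed hPsub
  obtain ⟨x0, hx0P, hx0min⟩ := hPcomp.exists_isMinOn hne hfc.continuousOn
  have hx0min' : ∀ z ∈ P, f x0 ≤ f z := fun z hz => hx0min hz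
  have main : ∀ N : ℕ, ∀ x : Fin n → ℝ, x ∈ P → (∀ z ∈ P, f x ≤ f z) →
      (Finset.univ.filter fun j => x j ≠ 0 ∧ x j ≠ 1).card ≤ N →
      ∃ xs ∈ P, (∀ j, xs j = 0 ∨ xs j = 1) ∧
        ∀ x' ∈ P, ∑ j, c j * xs j ≤ ∑ j, c j * x' j := by
    intro N
    induction N with
    | zero =>
      intro x hx hmin hcard
      refine ⟨x, hx, ?_, hmin⟩
      intro j
      by_contra hcon
      push_neg at hcon
      have : j ∈ Finset.univ.filter fun j => x j ≠ 0 ∧ x j ≠ 1 := by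
        simp [hcon.1, hcon.2]
      rw [Finset.card_eq_zero.mp (Nat.le_zero.mp hcard)] at this
      exact absurd this (Finset.notMem_empty j)
    | succ N ih =>
      intro x hx hmin hcard
      set F : Finset (Fin n) := Finset.univ.filter fun j => x j ≠ 0 ∧ x j ≠ 1 with hF
      have hFdef : ∀ j, j ∈ F ↔ (x j ≠ 0 ∧ x j ≠ 1) := by
        intro j; simp [hF]
      obtain ⟨hAx, hbox⟩ : (∀ i, (A.map (Int.cast : ℤ → ℝ)).mulVec x i = 1) ∧
          ∀ j, 0 ≤ x j ∧ x j ≤ 1 := by rw [hP] at hx; exact hx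
      by_cases hind : LinearIndependent ℝ
          (fun j : {j : Fin n // j ∈ F} => fun i : Fin m => (A i (j : Fin n) : ℝ))
      · exact ⟨x, hx, key_integral A hA x hAx hbox F hFdef hind, hmin⟩
      · obtain ⟨y, hyP, hymin, hmono, j0, hj0x, hj0y⟩ :=
          exchange_step A c x P hP hx hmin F hFdef hind
        set Fy : Finset (Fin n) := Finset.univ.filter fun j => y j ≠ 0 ∧ y j ≠ 1 with hFy
        have hsub : Fy ⊆ F := by
          intro j hj
          rw [hFy, Finset.mem_filter] at hj
          exact (hFdef j).mpr (hmono j hj.2)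
        have hj0F : j0 ∈ F := (hFdef j0).mpr hj0x
        have hj0Fy : j0 ∉ Fy := by
          rw [hFy, Finset.mem_filter]
          rintro ⟨-, h1, h2⟩
          rcases hj0y with h | h
          · exact h1 h
          · exact h2 h
        have hlt : Fy.card < F.card :=
          Finset.card_lt_card ⟨hsub, fun hFsub => hj0Fy (hFsub hj0F)⟩
        exact ih y hyP hymin (by rw [← hFy]; omega)
  exact main (Finset.univ.filter fun j => x0 j ≠ 0 ∧ x0 j ≠ 1).card x0 hx0P hx0min' le_rfl
end

section
/- Let V be a finite type, let E : V → V → Prop be a directed graph on V, and let s, f ∈ V with s ≠ f. Then the following are equivalent: (1) there exists x : V → V → ℤ with x v w ∈ {0, 1} for all v, w, with x v w = 0 whenever ¬E v w, and such that for every node n, (∑_{v} x v n) − (∑_{w} x n w) equals −1 if n = s, equals 1 if n = f, and equals 0 otherwise; (2) there is a directed path in E from s to f (i.e., Relation.ReflTransGen E s f holds). -/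
section Aux

variable {V : Type*} [Fintype V] [DecidableEq V] (E : V → V → Prop)

/-- Any chain can be shortened to a duplicate-free chain with the same endpoints. -/
lemma exists_nodup_chain_aux :
    ∀ (n : ℕ) (l : List V) (s : V), l.length ≤ n → List.Chain E s l →
      ∃ l' : List V, List.Chain E s l' ∧ (s :: l').Nodup ∧ l' ⊆ l ∧
        (s :: l').getLast? = (s :: l).getLast? := by
  intro n
  induction n with
  | zero =>
    intro l s hl _
    have : l = [] := List.length_eq_zero_iff.1 (Nat.le_zero.1 hl)
    subst this
    exact ⟨[], List.Chain.nil, by simp, by simp, rfl⟩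
  | succ n IH =>
    intro l s hl hchain
    by_cases hs : s ∈ l
    · obtain ⟨l₃, l₄, rfl⟩ := List.append_of_mem hs
      have hc4 : List.Chain E s l₄ := (List.isChain_cons_split.1 hchain).2
      have hlen : l₄.length ≤ n := by
        simp [List.length_append] at hl; omega
      obtain ⟨l', h1, h2, h3, h4⟩ := IH l₄ s hlen hc4
      refine ⟨l', h1, h2, fun a ha => by simp [h3 ha], ?_⟩
      rw [h4]
      have : s :: (l₃ ++ s :: l₄) = (s :: l₃) ++ (s :: l₄) := by simp
      rw [this, List.getLast?_append_of_ne_nil _ (List.cons_ne_nil _ _)]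
    · cases l with
      | nil => exact ⟨[], List.Chain.nil, by simp, by simp, rfl⟩
      | cons a t =>
        unfold List.Chain at hchain
        rw [List.chain_cons] at hchain
        obtain ⟨hsa, hct⟩ := hchain
        have hlen : t.length ≤ n := by simp at hl; omega
        obtain ⟨t', h1, h2, h3, h4⟩ := IH t a hlen hct
        have hsub : a :: t' ⊆ a :: t := fun z hz => by
          rcases List.mem_cons.1 hz with rfl | hz
          · exact List.mem_cons_self
          · exact List.mem_cons_of_mem _ (h3 hz)
        refine ⟨a :: t', List.chain_cons.2 ⟨hsa, h1⟩, ?_, hsub, ?_⟩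
        · refine List.nodup_cons.2 ⟨fun hmem => hs (hsub hmem), h2⟩
        · rw [List.getLast?_cons_cons, h4, List.getLast?_cons_cons]

/-- From a duplicate-free nonempty chain from `s`, build a unit flow from `s` to the
last vertex of the chain. -/
lemma chain_flow :
    ∀ (l : List V) (s : V) (hne : l ≠ []), List.Chain E s l → (s :: l).Nodup →
      ∃ x : V → V → ℤ,
        (∀ v w, x v w = 0 ∨ x v w = 1) ∧
        (∀ v w, x v w ≠ 0 → E v w) ∧
        (∀ v w, x v w ≠ 0 → v ∈ s :: l ∧ w ∈ s :: l) ∧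
        (∀ n : V, (∑ v, x v n) - (∑ w, x n w) =
          if n = s then -1
          else if n = (s :: l).getLast (List.cons_ne_nil _ _) then 1 else 0) := by
  intro l
  induction l with
  | nil => intro s hne; exact absurd rfl hne
  | cons a l' IH =>
    intro s _ hchain hnodup
    unfold List.Chain at hchain
    rw [List.chain_cons] at hchain
    obtain ⟨hsa, hcl⟩ := hchain
    have hs_not : s ∉ a :: l' := (List.nodup_cons.1 hnodup).1
    have hnd' : (a :: l').Nodup := (List.nodup_cons.1 hnodup).2
    have hsa' : s ≠ a := fun h => hs_not (h ▸ List.mem_cons_self)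
    cases l' with
    | nil =>
      refine ⟨fun v w => if v = s then if w = a then 1 else 0 else 0,
        fun v w => by dsimp only; split_ifs <;> simp, fun v w h => ?_,
        fun v w h => ?_, fun n => ?_⟩
      · dsimp only at h
        by_cases h1 : v = s
        · subst h1
          by_cases h2 : w = a
          · exact h2 ▸ hsa
          · simp [h2] at h
        · simp [h1] at h
      · dsimp only at h
        by_cases h1 : v = s
        · subst h1
          by_cases h2 : w = a
          · subst h2; simp
          · simp [h2] at h
        · simp [h1] at h
      · dsimp only
        have h1 : (∑ v, if v = s then if n = a then (1:ℤ) else 0 else 0)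
            = if n = a then 1 else 0 := by
          simp [Finset.sum_ite_eq']
        have h2 : (∑ w, if n = s then if w = a then (1:ℤ) else 0 else 0)
            = if n = s then 1 else 0 := by
          by_cases hns : n = s <;> simp [hns, Finset.sum_ite_eq']
        rw [h1, h2]
        have : (s :: [a]).getLast (List.cons_ne_nil _ _) = a := rfl
        rw [this]
        split_ifs <;> first | omega | simp_all
    | cons b t =>
      obtain ⟨x', h01, hE, hmem, hcons⟩ :=
        IH a (List.cons_ne_nil _ _) hcl hnd'
      have hx's : ∀ w, x' s w = 0 := fun w => by
        by_contra h; exact hs_not (hmem s w h).1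
      have hx's' : ∀ v, x' v s = 0 := fun v => by
        by_contra h; exact hs_not (hmem v s h).2
      set L := ((a :: b :: t).getLast (List.cons_ne_nil _ _)) with hL
      have hLmem : L ∈ a :: b :: t := List.getLast_mem _
      have hsL : s ≠ L := fun h => hs_not (h ▸ hLmem)
      have haL : a ≠ L := by
        have : L = (b :: t).getLast (List.cons_ne_nil _ _) :=
          List.getLast_cons (List.cons_ne_nil _ _)
        have hLt : L ∈ b :: t := this ▸ List.getLast_mem _
        exact fun h => (List.nodup_cons.1 hnd').1 (h ▸ hLt)
      refine ⟨fun v w => x' v w + (if v = s then if w = a then 1 else 0 else 0),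
        fun v w => ?_, fun v w h => ?_, fun v w h => ?_, fun n => ?_⟩
      · dsimp only
        by_cases h1 : v = s
        · subst h1
          rw [hx's w]
          by_cases h2 : w = a <;> simp [h2]
        · simpa [h1] using h01 v w
      · dsimp only at h
        by_cases h1 : v = s
        · subst h1
          rw [hx's w] at h
          by_cases h2 : w = a
          · exact h2 ▸ hsa
          · simp [h2] at h
        · simp [h1] at h
          exact hE v w h
      · dsimp only at h
        by_cases h1 : v = s
        · subst h1
          rw [hx's w] at h
          by_cases h2 : w = a
          · subst h2; simp
          · simp [h2] at h
        · simp [h1] at h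
          exact ⟨List.mem_cons_of_mem _ (hmem v w h).1,
            List.mem_cons_of_mem _ (hmem v w h).2⟩
      · dsimp only
        have e1 : (∑ v, (x' v n + if v = s then if n = a then (1:ℤ) else 0 else 0))
            = (∑ v, x' v n) + (if n = a then 1 else 0) := by
          rw [Finset.sum_add_distrib]
          congr 1
          simp [Finset.sum_ite_eq']
        have e2 : (∑ w, (x' n w + if n = s then if w = a then (1:ℤ) else 0 else 0))
            = (∑ w, x' n w) + (if n = s then 1 else 0) := by
          rw [Finset.sum_add_distrib]
          congr 1
          by_cases hns : n = s <;> simp [hns, Finset.sum_ite_eq']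
        rw [e1, e2]
        have hold := hcons n
        have hgl : ((s :: a :: b :: t).getLast (List.cons_ne_nil _ _)) = L :=
          List.getLast_cons (List.cons_ne_nil _ _)
        rw [hgl]
        have key : (∑ v, x' v n) - (∑ w, x' n w)
            = if n = a then -1 else if n = L then 1 else 0 := hold
        split_ifs at key ⊢ <;> first | omega | simp_all

end Aux

/-- Flow-conservation path constraints characterize reachability: for a directed graph
`E` on a finite vertex type `V` and distinct vertices `s ≠ f`, there exists a `{0,1}`
assignment `x` on arcs, supported on `E`, satisfying the conservation constraints
(in-flow minus out-flow equals `-1` at `s`, `1` at `f`, `0` elsewhere) iff there is a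
directed path in `E` from `s` to `f`. -/
theorem flow_conservation_iff_reflTransGen
    {V : Type*} [Fintype V] [DecidableEq V]
    (E : V → V → Prop) (s f : V) (hsf : s ≠ f) :
    (∃ x : V → V → ℤ,
      (∀ v w, x v w = 0 ∨ x v w = 1) ∧
      (∀ v w, ¬ E v w → x v w = 0) ∧
      (∀ n : V, (∑ v, x v n) - (∑ w, x n w) =
        if n = s then -1 else if n = f then 1 else 0)) ↔
    Relation.ReflTransGen E s f := by
  classical
  constructor
  · rintro ⟨x, h01, hsupp, hcons⟩
    set pred : V → V → Prop := fun v w => x v w = 1 with hpred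
    set R : Finset V := Finset.univ.filter (fun n => Relation.ReflTransGen pred s n)
      with hR
    have hmemR : ∀ n, n ∈ R ↔ Relation.ReflTransGen pred s n := by
      intro n; simp [hR]
    have hsR : s ∈ R := (hmemR s).2 Relation.ReflTransGen.refl
    have hout : ∀ n ∈ R, ∀ w, w ∉ R → x n w = 0 := by
      intro n hn w hw
      rcases h01 n w with h | h
      · exact h
      · exact absurd ((hmemR w).2 (((hmemR n).1 hn).tail h)) hw
    -- the flow out of R across the cut is zero, into R is nonneg
    have hfR : f ∈ R := by
      by_contra hfR
      have key : (∑ n ∈ R, ((∑ v, x v n) - (∑ w, x n w))) = -1 := by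
        have : ∀ n, ((if n = s then (-1:ℤ) else if n = f then 1 else 0))
            = (if n = s then -1 else 0) + (if n = f then 1 else 0) := by
          intro n
          by_cases h1 : n = s
          · subst h1; simp [hsf]
          · simp [h1]
        calc (∑ n ∈ R, ((∑ v, x v n) - (∑ w, x n w)))
            = ∑ n ∈ R, ((if n = s then (-1:ℤ) else 0) + (if n = f then 1 else 0)) := by
              refine Finset.sum_congr rfl fun n _ => ?_
              rw [hcons n, this n]
          _ = -1 := by
              rw [Finset.sum_add_distrib]
              simp [Finset.sum_ite_eq', hsR, hfR]
      have pos : (0:ℤ) ≤ ∑ n ∈ R, ((∑ v, x v n) - (∑ w, x n w)) := by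
        have split1 : ∀ n, (∑ v, x v n) = (∑ v ∈ R, x v n) + (∑ v ∈ Rᶜ, x v n) :=
          fun n => (Finset.sum_add_sum_compl R _).symm
        have split2 : ∀ n, (∑ w, x n w) = (∑ w ∈ R, x n w) + (∑ w ∈ Rᶜ, x n w) :=
          fun n => (Finset.sum_add_sum_compl R _).symm
        have : (∑ n ∈ R, ((∑ v, x v n) - (∑ w, x n w)))
            = (∑ n ∈ R, ∑ v ∈ Rᶜ, x v n) - (∑ n ∈ R, ∑ w ∈ Rᶜ, x n w) := by
          simp only [split1, split2]
          rw [Finset.sum_sub_distrib, Finset.sum_add_distrib, Finset.sum_add_distrib]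
          have hcomm : (∑ n ∈ R, ∑ v ∈ R, x v n) = (∑ n ∈ R, ∑ v ∈ R, x n v) :=
            Finset.sum_comm
          rw [hcomm]
          ring
        rw [this]
        have hz : (∑ n ∈ R, ∑ w ∈ Rᶜ, x n w) = 0 := by
          refine Finset.sum_eq_zero fun n hn => Finset.sum_eq_zero fun w hw => ?_
          exact hout n hn w (Finset.mem_compl.1 hw)
        rw [hz, sub_zero]
        refine Finset.sum_nonneg fun n _ => Finset.sum_nonneg fun v _ => ?_
        rcases h01 v n with h | h <;> omega
      omega
    exact Relation.ReflTransGen.mono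
      (fun v w h => by
        have h' : x v w = 1 := h
        by_contra hE
        rw [hsupp v w hE] at h'
        exact one_ne_zero h'.symm) _ _ ((hmemR f).1 hfR)
  · intro h
    obtain ⟨l, hc, hlast⟩ := List.exists_isChain_cons_of_relationReflTransGen h
    obtain ⟨l', h1, h2, _, h4⟩ :=
      exists_nodup_chain_aux E l.length l s le_rfl hc
    have hlast' : (s :: l').getLast (List.cons_ne_nil _ _) = f := by
      have e1 : (s :: l').getLast? = some ((s :: l').getLast (List.cons_ne_nil _ _)) :=
        List.getLast?_eq_getLast _
      have e2 : (s :: l).getLast? = some ((s :: l).getLast (List.cons_ne_nil _ _)) :=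
        List.getLast?_eq_getLast _
      rw [e1, e2, hlast] at h4
      exact Option.some_injective _ h4
    have hne : l' ≠ [] := by
      intro h0
      subst h0
      exact hsf hlast'
    obtain ⟨x, h01, hE, _, hcons⟩ := chain_flow E l' s hne h1 h2
    refine ⟨x, h01, fun v w hEvw => ?_, fun n => ?_⟩
    · by_contra h0
      exact hEvw (hE v w h0)
    · rw [hcons n, hlast']
end
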